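/- Suppose τ, σ, σ/τ ∈ H. Then the elliptic gamma function satisfies the three-term relation Γ(z, τ, σ) = Γ(z+τ, τ, σ+τ) · Γ(z, τ+σ, σ) for all z ∈ ℂ for which all factors in the defining products are nonzero. -/

import Mathlib

open Complex Filter Topology

/-- The open upper half-plane as a subset of `ℂ`. -/
def UHP : Set ℂ := {z : ℂ | 0 < z.im}

/-- `qexp τ = e^{2πiτ}`. -/
noncomputable def qexp (τ : ℂ) : ℂ := Complex.exp (2 * Real.pi * Complex.I * τ)

/-- Elliptic zeta values `Z_k(τ,σ)`. -/
noncomputable def ellipticZeta (k : ℕ) (τ σ : ℂ) : ℂ :=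
  -((2 * (Real.pi : ℂ) * Complex.I) ^ k / (Nat.factorial (k - 1) : ℂ)) *
    ∑' j : ℕ+, (j : ℂ) ^ (k - 1) *
      (qexp τ ^ (j : ℕ) - (-1 : ℂ) ^ k * qexp σ ^ (j : ℕ)) /
      ((1 - qexp τ ^ (j : ℕ)) * (1 - qexp σ ^ (j : ℕ)))

/-- `D_k(q)`: the normalized generating function of sums of `(k-1)`-st powers of divisors. -/
noncomputable def Dk (k : ℕ) (q : ℂ) : ℂ :=
  ((-2 * (Real.pi : ℂ) * Complex.I) ^ k / (Nat.factorial (k - 1) : ℂ)) *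
    ∑' n : ℕ+, (∑ d ∈ Nat.divisors (n : ℕ), (d : ℂ) ^ (k - 1)) * q ^ (n : ℕ)

/-- Ruijsenaars's elliptic gamma function. -/
noncomputable def ellipticGamma (z τ σ : ℂ) : ℂ :=
  ∏' p : ℕ × ℕ,
    (1 - qexp τ ^ (p.1 + 1) * qexp σ ^ (p.2 + 1) * Complex.exp (-(2 * Real.pi * Complex.I) * z)) /
    (1 - qexp τ ^ p.1 * qexp σ ^ p.2 * Complex.exp (2 * Real.pi * Complex.I * z))

/-- The modified theta function `θ₀(z,τ)`. -/
noncomputable def theta0 (z τ : ℂ) : ℂ :=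
  ∏' j : ℕ, (1 - qexp τ ^ (j + 1) * Complex.exp (-(2 * Real.pi * Complex.I) * z)) *
            (1 - qexp τ ^ j * Complex.exp (2 * Real.pi * Complex.I * z))

/-- A modular form of weight `k` for `SL(2,ℤ)`: a holomorphic function on the
upper half-plane transforming with weight `k` under `SL(2,ℤ)` and bounded as `Im τ → ∞`. -/
def IsModularForm (k : ℕ) (G : ℂ → ℂ) : Prop :=
  DifferentiableOn ℂ G UHP ∧
  (∀ A : Matrix.SpecialLinearGroup (Fin 2) ℤ, ∀ τ ∈ UHP,
      G (((A 0 0 : ℤ) * τ + (A 0 1 : ℤ)) / ((A 1 0 : ℤ) * τ + (A 1 1 : ℤ))) =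
        ((A 1 0 : ℤ) * τ + (A 1 1 : ℤ)) ^ k * G τ) ∧
  (∃ C : ℝ, ∀ τ ∈ UHP, 1 ≤ τ.im → ‖G τ‖ ≤ C)

/-- All factors in the defining double product of the elliptic gamma function are nonzero. -/
def EGFactorsNeZero (z τ σ : ℂ) : Prop :=
  ∀ j ℓ : ℕ,
    (1 - qexp τ ^ (j + 1) * qexp σ ^ (ℓ + 1) * Complex.exp (-(2 * Real.pi * Complex.I) * z)) ≠ 0 ∧
    (1 - qexp τ ^ j * qexp σ ^ ℓ * Complex.exp (2 * Real.pi * Complex.I * z)) ≠ 0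

namespace EG3

lemma bdd_of_ev {α : Type*} {f : α → ℝ} (h : ∀ᶠ x in Filter.cofinite, f x ≤ 2) :
    ∃ C : ℝ, ∀ x, f x ≤ C := by
  have hfin : {x | ¬ f x ≤ 2}.Finite := h
  obtain ⟨C₀, hC₀⟩ := (hfin.image f).bddAbove
  refine ⟨max 2 C₀, fun x => ?_⟩
  by_cases hx : f x ≤ 2
  · exact hx.trans (le_max_left _ _)
  · exact (hC₀ (Set.mem_image_of_mem f hx)).trans (le_max_right _ _)

lemma log_summable {ι : Type*} {w : ι → ℂ} (hw : Summable w) :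
    Summable fun i => Complex.log (1 + w i) := by
  have h2 : Filter.Tendsto (fun i => ‖w i‖) Filter.cofinite (nhds 0) := by
    simpa using hw.tendsto_cofinite_zero.norm
  have h3 : ∀ᶠ i in Filter.cofinite, ‖w i‖ ≤ 1/2 := h2.eventually (eventually_le_nhds (by norm_num))
  refine Summable.of_norm_bounded_eventually (g := fun i => (3/2) * ‖w i‖) (hw.norm.mul_left _) ?_
  filter_upwards [h3] with i hi
  exact Complex.norm_log_one_add_half_le_self hi

lemma mult_one_add {ι : Type*} {w : ι → ℂ} (hw : Summable w) (h0 : ∀ i, 1 + w i ≠ 0) :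
    Multipliable fun i => 1 + w i :=
  Complex.multipliable_of_summable_log (log_summable hw)

lemma tprod_one_add_ne_zero {ι : Type*} {w : ι → ℂ} (hw : Summable w) (h0 : ∀ i, 1 + w i ≠ 0) :
    (∏' i, (1 + w i)) ≠ 0 := by
  have h := Complex.cexp_tsum_eq_tprod h0 (log_summable hw)
  rw [← h]
  exact Complex.exp_ne_zero _

lemma mult' {ι : Type*} {f : ι → ℂ} (hf : Summable fun i => f i - 1) (h0 : ∀ i, f i ≠ 0) :
    Multipliable f := by
  have h0' : ∀ i, 1 + (f i - 1) ≠ 0 := fun i h => h0 i (by linear_combination h)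
  exact (mult_one_add hf h0').congr fun i => by ring

lemma tprod_ne' {ι : Type*} {f : ι → ℂ} (hf : Summable fun i => f i - 1) (h0 : ∀ i, f i ≠ 0) :
    (∏' i, f i) ≠ 0 := by
  have h0' : ∀ i, 1 + (f i - 1) ≠ 0 := fun i h => h0 i (by linear_combination h)
  have : (∏' i, f i) = ∏' i, (1 + (f i - 1)) := tprod_congr fun i => by ring
  rw [this]
  exact tprod_one_add_ne_zero hf h0'

lemma inv_bound {ι : Type*} {f : ι → ℂ} (hf : Summable fun i => f i - 1) :
    ∃ C : ℝ, ∀ i, ‖(f i)⁻¹‖ ≤ C := by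
  apply bdd_of_ev
  have h2 : Filter.Tendsto (fun i => ‖f i - 1‖) Filter.cofinite (nhds 0) := by
    simpa using hf.tendsto_cofinite_zero.norm
  have h3 : ∀ᶠ i in Filter.cofinite, ‖f i - 1‖ ≤ 1/2 :=
    h2.eventually (eventually_le_nhds (by norm_num))
  filter_upwards [h3] with i hi
  have hge : (1:ℝ)/2 ≤ ‖f i‖ := by
    have := norm_sub_norm_le (1 : ℂ) (f i)
    rw [norm_sub_rev] at this
    simp only [norm_one] at this
    linarith
  rw [norm_inv]
  calc ‖f i‖⁻¹ ≤ ((1:ℝ)/2)⁻¹ := by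
        apply inv_anti₀ (by norm_num) hge
    _ = 2 := by norm_num

lemma div_mult {ι : Type*} {A B : ι → ℂ} (hA0 : ∀ i, A i ≠ 0) (hB0 : ∀ i, B i ≠ 0)
    (hAB : Summable fun i => A i - B i) (hB : Summable fun i => B i - 1) :
    Multipliable fun i => A i / B i := by
  obtain ⟨C, hC⟩ := inv_bound hB
  refine mult' ?_ fun i => div_ne_zero (hA0 i) (hB0 i)
  refine Summable.of_norm_bounded (g := fun i => ‖A i - B i‖ * C) (hAB.norm.mul_right C) fun i => ?_
  have h : A i / B i - 1 = (A i - B i) * (B i)⁻¹ := by rw [div_sub_one (hB0 i), div_eq_mul_inv]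
  rw [h, norm_mul]
  exact mul_le_mul_of_nonneg_left (hC i) (norm_nonneg _)

lemma tprod_div_mul_eq {ι : Type*} (A B : ι → ℂ) (hA0 : ∀ i, A i ≠ 0) (hB0 : ∀ i, B i ≠ 0)
    (hAB : Summable fun i => A i - B i) (hB : Summable fun i => B i - 1) :
    (∏' i, A i / B i) * ∏' i, B i = ∏' i, A i := by
  rw [← Multipliable.tprod_mul (div_mult hA0 hB0 hAB hB) (mult' hB hB0)]
  exact tprod_congr fun i => div_mul_cancel₀ (A i) (hB0 i)

lemma norm_qexp_lt_one {τ : ℂ} (hτ : 0 < τ.im) : ‖qexp τ‖ < 1 := by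
  rw [qexp, Complex.norm_exp, Real.exp_lt_one_iff]
  have h : (2 * (Real.pi : ℂ) * Complex.I * τ).re = -(2 * Real.pi * τ.im) := by
    simp [Complex.mul_re, Complex.mul_im]
  rw [h]
  have := Real.pi_pos
  nlinarith



noncomputable def Nf (τ σ z : ℂ) (p : ℕ × ℕ) : ℂ :=
  1 - qexp τ ^ (p.1 + 1) * qexp σ ^ (p.2 + 1) * Complex.exp (-(2 * Real.pi * Complex.I) * z)

noncomputable def Df (τ σ z : ℂ) (p : ℕ × ℕ) : ℂ :=
  1 - qexp τ ^ p.1 * qexp σ ^ p.2 * Complex.exp (2 * Real.pi * Complex.I * z)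

lemma Nf2 (τ σ z : ℂ) (p : ℕ × ℕ) :
    Nf τ (σ + τ) (z + τ) p = Nf τ σ z (p.1 + p.2, p.2) := by
  unfold Nf qexp
  congr 1
  simp only [← Complex.exp_nat_mul, ← Complex.exp_add]
  congr 1
  push_cast
  ring

lemma Df2 (τ σ z : ℂ) (p : ℕ × ℕ) :
    Df τ (σ + τ) (z + τ) p = Df τ σ z (p.1 + p.2 + 1, p.2) := by
  unfold Df qexp
  congr 1
  simp only [← Complex.exp_nat_mul, ← Complex.exp_add]
  congr 1
  push_cast
  ring

lemma Nf3 (τ σ z : ℂ) (p : ℕ × ℕ) :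
    Nf (τ + σ) σ z p = Nf τ σ z (p.1, p.1 + p.2 + 1) := by
  unfold Nf qexp
  congr 1
  simp only [← Complex.exp_nat_mul, ← Complex.exp_add]
  congr 1
  push_cast
  ring

lemma Df3 (τ σ z : ℂ) (p : ℕ × ℕ) :
    Df (τ + σ) σ z p = Df τ σ z (p.1, p.1 + p.2) := by
  unfold Df qexp
  congr 1
  simp only [← Complex.exp_nat_mul, ← Complex.exp_add]
  congr 1
  push_cast
  ring

def sN : Set (ℕ × ℕ) := {p | p.2 ≤ p.1}
def sD : Set (ℕ × ℕ) := {p | p.2 < p.1}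

def eA : (ℕ × ℕ) ≃ sN where
  toFun p := ⟨(p.1 + p.2, p.2), Nat.le_add_left _ _⟩
  invFun q := (q.1.1 - q.1.2, q.1.2)
  left_inv p := by
    obtain ⟨a, b⟩ := p
    try simp
    try omega
  right_inv q := by
    obtain ⟨⟨a, b⟩, h⟩ := q
    simp only [sN, Set.mem_setOf_eq] at h
    apply Subtype.ext
    simp
    omega

def eA' : (ℕ × ℕ) ≃ ↥sNᶜ where
  toFun p := ⟨(p.1, p.1 + p.2 + 1), by
    simp only [Set.mem_compl_iff, sN, Set.mem_setOf_eq, not_le]; omega⟩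
  invFun q := (q.1.1, q.1.2 - q.1.1 - 1)
  left_inv p := by
    obtain ⟨a, b⟩ := p
    try simp
    try omega
  right_inv q := by
    obtain ⟨⟨a, b⟩, h⟩ := q
    simp only [Set.mem_compl_iff, sN, Set.mem_setOf_eq, not_le] at h
    apply Subtype.ext
    simp
    omega

def eB : (ℕ × ℕ) ≃ sD where
  toFun p := ⟨(p.1 + p.2 + 1, p.2), by simp only [sD, Set.mem_setOf_eq]; omega⟩
  invFun q := (q.1.1 - q.1.2 - 1, q.1.2)
  left_inv p := by
    obtain ⟨a, b⟩ := p
    try simp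
    try omega
  right_inv q := by
    obtain ⟨⟨a, b⟩, h⟩ := q
    simp only [sD, Set.mem_setOf_eq] at h
    apply Subtype.ext
    simp
    omega

def eB' : (ℕ × ℕ) ≃ ↥sDᶜ where
  toFun p := ⟨(p.1, p.1 + p.2), by
    simp only [Set.mem_compl_iff, sD, Set.mem_setOf_eq, not_lt]; omega⟩
  invFun q := (q.1.1, q.1.2 - q.1.1)
  left_inv p := by
    obtain ⟨a, b⟩ := p
    try simp
    try omega
  right_inv q := by
    obtain ⟨⟨a, b⟩, h⟩ := q
    simp only [Set.mem_compl_iff, sD, Set.mem_setOf_eq, not_lt] at h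
    apply Subtype.ext
    simp
    omega

lemma key_summable {τ σ : ℂ} (hq : ‖qexp τ‖ < 1) (hr : ‖qexp σ‖ < 1) (c : ℂ)
    (m : ℕ × ℕ → ℕ × ℕ) (hm : Function.Injective m) :
    Summable fun p : ℕ × ℕ => qexp τ ^ (m p).1 * qexp σ ^ (m p).2 * c := by
  have hbase : Summable fun p : ℕ × ℕ => ‖qexp τ‖ ^ p.1 * ‖qexp σ‖ ^ p.2 :=
    (summable_geometric_of_lt_one (norm_nonneg _) hq).mul_of_nonneg
      (summable_geometric_of_lt_one (norm_nonneg _) hr)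
      (fun _ => pow_nonneg (norm_nonneg _) _) (fun _ => pow_nonneg (norm_nonneg _) _)
  refine Summable.of_norm_bounded
    (g := fun p => (‖qexp τ‖ ^ (m p).1 * ‖qexp σ‖ ^ (m p).2) * ‖c‖)
    ((hbase.comp_injective hm).mul_right _) fun p => ?_
  rw [norm_mul, norm_mul, norm_pow, norm_pow]

end EG3

/-- first three-term relation for the elliptic gamma function. -/
theorem ellipticGamma_three_term
    (τ σ : ℂ) (hτ : τ ∈ UHP) (hσ : σ ∈ UHP) (hστ : σ / τ ∈ UHP) (z : ℂ)
    (h1 : EGFactorsNeZero z τ σ) (h2 : EGFactorsNeZero (z + τ) τ (σ + τ))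
    (h3 : EGFactorsNeZero z (τ + σ) σ) :
    ellipticGamma z τ σ = ellipticGamma (z + τ) τ (σ + τ) * ellipticGamma z (τ + σ) σ := by
    classical
  have hq : ‖qexp τ‖ < 1 := EG3.norm_qexp_lt_one hτ
  have hr : ‖qexp σ‖ < 1 := EG3.norm_qexp_lt_one hσ
  have hidn : Function.Injective (id : ℕ × ℕ → ℕ × ℕ) := Function.injective_id
  have hA : Function.Injective (fun p : ℕ × ℕ => ((p.1 + p.2, p.2) : ℕ × ℕ)) := by
    intro a b h
    rw [Prod.ext_iff] at h ⊢
    dsimp only at h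
    omega
  have hB : Function.Injective (fun p : ℕ × ℕ => ((p.1 + p.2 + 1, p.2) : ℕ × ℕ)) := by
    intro a b h
    rw [Prod.ext_iff] at h ⊢
    dsimp only at h
    omega
  have hA' : Function.Injective (fun p : ℕ × ℕ => ((p.1, p.1 + p.2 + 1) : ℕ × ℕ)) := by
    intro a b h
    rw [Prod.ext_iff] at h ⊢
    dsimp only at h
    omega
  have hB' : Function.Injective (fun p : ℕ × ℕ => ((p.1, p.1 + p.2) : ℕ × ℕ)) := by
    intro a b h
    rw [Prod.ext_iff] at h ⊢
    dsimp only at h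
    omega
  -- abbreviations inside expressions below:
  -- X = exp(2πiz), Y = exp(-(2πi)z), q = qexp τ, r = qexp σ
  have S7 : Summable (fun p : ℕ × ℕ => EG3.Nf τ σ z p - 1) := by
    refine (EG3.key_summable hq hr
      (-(qexp τ * qexp σ * Complex.exp (-(2 * Real.pi * Complex.I) * z))) id hidn).congr
      fun p => ?_
    dsimp only [EG3.Nf, id]
    ring
  have S1 : Summable (fun p : ℕ × ℕ => EG3.Df τ σ z p - 1) := by
    refine (EG3.key_summable hq hr
      (-(Complex.exp (2 * Real.pi * Complex.I * z))) id hidn).congr fun p => ?_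
    dsimp only [EG3.Df, id]
    ring
  have S2 : Summable (fun p : ℕ × ℕ => EG3.Nf τ σ z p - EG3.Df τ σ z p) := by
    refine (EG3.key_summable hq hr
      (Complex.exp (2 * Real.pi * Complex.I * z) -
        qexp τ * qexp σ * Complex.exp (-(2 * Real.pi * Complex.I) * z)) id hidn).congr
      fun p => ?_
    dsimp only [EG3.Nf, EG3.Df, id]
    ring
  have S8 : Summable (fun p : ℕ × ℕ => EG3.Nf τ σ z (p.1 + p.2, p.2) - 1) := by
    refine (EG3.key_summable hq hr
      (-(qexp τ * qexp σ * Complex.exp (-(2 * Real.pi * Complex.I) * z)))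
      (fun p => (p.1 + p.2, p.2)) hA).congr fun p => ?_
    dsimp only [EG3.Nf]
    ring
  have S9 : Summable (fun p : ℕ × ℕ => EG3.Nf τ σ z (p.1, p.1 + p.2 + 1) - 1) := by
    refine (EG3.key_summable hq hr
      (-(qexp τ * qexp σ * Complex.exp (-(2 * Real.pi * Complex.I) * z)))
      (fun p => (p.1, p.1 + p.2 + 1)) hA').congr fun p => ?_
    dsimp only [EG3.Nf]
    ring
  have S3 : Summable (fun p : ℕ × ℕ => EG3.Df τ σ z (p.1 + p.2 + 1, p.2) - 1) := by
    refine (EG3.key_summable hq hr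
      (-(Complex.exp (2 * Real.pi * Complex.I * z)))
      (fun p => (p.1 + p.2 + 1, p.2)) hB).congr fun p => ?_
    dsimp only [EG3.Df]
    ring
  have S5 : Summable (fun p : ℕ × ℕ => EG3.Df τ σ z (p.1, p.1 + p.2) - 1) := by
    refine (EG3.key_summable hq hr
      (-(Complex.exp (2 * Real.pi * Complex.I * z)))
      (fun p => (p.1, p.1 + p.2)) hB').congr fun p => ?_
    dsimp only [EG3.Df]
    ring
  have S4 : Summable (fun p : ℕ × ℕ =>
      EG3.Nf τ σ z (p.1 + p.2, p.2) - EG3.Df τ σ z (p.1 + p.2 + 1, p.2)) := by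
    refine (EG3.key_summable hq hr
      (Complex.exp (2 * Real.pi * Complex.I * z) -
        qexp σ * Complex.exp (-(2 * Real.pi * Complex.I) * z))
      (fun p => (p.1 + p.2 + 1, p.2)) hB).congr fun p => ?_
    dsimp only [EG3.Nf, EG3.Df]
    ring
  have S6 : Summable (fun p : ℕ × ℕ =>
      EG3.Nf τ σ z (p.1, p.1 + p.2 + 1) - EG3.Df τ σ z (p.1, p.1 + p.2)) := by
    refine (EG3.key_summable hq hr
      (Complex.exp (2 * Real.pi * Complex.I * z) -
        qexp τ * qexp σ ^ 2 * Complex.exp (-(2 * Real.pi * Complex.I) * z))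
      (fun p => (p.1, p.1 + p.2)) hB').congr fun p => ?_
    dsimp only [EG3.Nf, EG3.Df]
    ring
  -- nonvanishing of factors
  have hN0 : ∀ p : ℕ × ℕ, EG3.Nf τ σ z p ≠ 0 := fun p => (h1 p.1 p.2).1
  have hD0 : ∀ p : ℕ × ℕ, EG3.Df τ σ z p ≠ 0 := fun p => (h1 p.1 p.2).2
  have hNA0 : ∀ p : ℕ × ℕ, EG3.Nf τ σ z (p.1 + p.2, p.2) ≠ 0 := by
    intro p
    rw [← EG3.Nf2 τ σ z p]
    exact (h2 p.1 p.2).1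
  have hDB0 : ∀ p : ℕ × ℕ, EG3.Df τ σ z (p.1 + p.2 + 1, p.2) ≠ 0 := by
    intro p
    rw [← EG3.Df2 τ σ z p]
    exact (h2 p.1 p.2).2
  have hNA'0 : ∀ p : ℕ × ℕ, EG3.Nf τ σ z (p.1, p.1 + p.2 + 1) ≠ 0 := by
    intro p
    rw [← EG3.Nf3 τ σ z p]
    exact (h3 p.1 p.2).1
  have hDB'0 : ∀ p : ℕ × ℕ, EG3.Df τ σ z (p.1, p.1 + p.2) ≠ 0 := by
    intro p
    rw [← EG3.Df3 τ σ z p]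
    exact (h3 p.1 p.2).2
  -- multipliability
  have MNA : Multipliable (fun p : ℕ × ℕ => EG3.Nf τ σ z (p.1 + p.2, p.2)) :=
    EG3.mult' S8 hNA0
  have MNA' : Multipliable (fun p : ℕ × ℕ => EG3.Nf τ σ z (p.1, p.1 + p.2 + 1)) :=
    EG3.mult' S9 hNA'0
  have MDB : Multipliable (fun p : ℕ × ℕ => EG3.Df τ σ z (p.1 + p.2 + 1, p.2)) :=
    EG3.mult' S3 hDB0
  have MDB' : Multipliable (fun p : ℕ × ℕ => EG3.Df τ σ z (p.1, p.1 + p.2)) :=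
    EG3.mult' S5 hDB'0
  -- splitting of the N-product
  have EN : (∏' p : ℕ × ℕ, EG3.Nf τ σ z (p.1 + p.2, p.2)) *
      (∏' p : ℕ × ℕ, EG3.Nf τ σ z (p.1, p.1 + p.2 + 1)) = ∏' p : ℕ × ℕ, EG3.Nf τ σ z p := by
    have e1 : (∏' p : ℕ × ℕ, EG3.Nf τ σ z (p.1 + p.2, p.2)) =
        ∏' x : EG3.sN, EG3.Nf τ σ z x := by
      rw [← EG3.eA.tprod_eq (fun x : EG3.sN => EG3.Nf τ σ z x)]
      exact tprod_congr fun p => rfl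
    have e2 : (∏' p : ℕ × ℕ, EG3.Nf τ σ z (p.1, p.1 + p.2 + 1)) =
        ∏' x : ↥EG3.sNᶜ, EG3.Nf τ σ z x := by
      rw [← EG3.eA'.tprod_eq (fun x : ↥EG3.sNᶜ => EG3.Nf τ σ z x)]
      exact tprod_congr fun p => rfl
    rw [e1, e2]
    refine Multipliable.tprod_mul_tprod_compl ?_ ?_
    · exact EG3.eA.multipliable_iff.mp (MNA.congr fun p => rfl)
    · exact EG3.eA'.multipliable_iff.mp (MNA'.congr fun p => rfl)
  -- splitting of the D-product
  have ED : (∏' p : ℕ × ℕ, EG3.Df τ σ z (p.1 + p.2 + 1, p.2)) *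
      (∏' p : ℕ × ℕ, EG3.Df τ σ z (p.1, p.1 + p.2)) = ∏' p : ℕ × ℕ, EG3.Df τ σ z p := by
    have e1 : (∏' p : ℕ × ℕ, EG3.Df τ σ z (p.1 + p.2 + 1, p.2)) =
        ∏' x : EG3.sD, EG3.Df τ σ z x := by
      rw [← EG3.eB.tprod_eq (fun x : EG3.sD => EG3.Df τ σ z x)]
      exact tprod_congr fun p => rfl
    have e2 : (∏' p : ℕ × ℕ, EG3.Df τ σ z (p.1, p.1 + p.2)) =
        ∏' x : ↥EG3.sDᶜ, EG3.Df τ σ z x := by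
      rw [← EG3.eB'.tprod_eq (fun x : ↥EG3.sDᶜ => EG3.Df τ σ z x)]
      exact tprod_congr fun p => rfl
    rw [e1, e2]
    refine Multipliable.tprod_mul_tprod_compl ?_ ?_
    · exact EG3.eB.multipliable_iff.mp (MDB.congr fun p => rfl)
    · exact EG3.eB'.multipliable_iff.mp (MDB'.congr fun p => rfl)
  -- the three gamma identities
  have E1 : ellipticGamma z τ σ * (∏' p : ℕ × ℕ, EG3.Df τ σ z p) =
      ∏' p : ℕ × ℕ, EG3.Nf τ σ z p := by
    rw [show ellipticGamma z τ σ =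
      ∏' p : ℕ × ℕ, EG3.Nf τ σ z p / EG3.Df τ σ z p from rfl]
    exact EG3.tprod_div_mul_eq _ _ hN0 hD0 S2 S1
  have E2 : ellipticGamma (z + τ) τ (σ + τ) *
      (∏' p : ℕ × ℕ, EG3.Df τ σ z (p.1 + p.2 + 1, p.2)) =
      ∏' p : ℕ × ℕ, EG3.Nf τ σ z (p.1 + p.2, p.2) := by
    rw [show ellipticGamma (z + τ) τ (σ + τ) =
      ∏' p : ℕ × ℕ, EG3.Nf τ (σ + τ) (z + τ) p / EG3.Df τ (σ + τ) (z + τ) p from rfl]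
    rw [show (∏' p : ℕ × ℕ, EG3.Nf τ (σ + τ) (z + τ) p / EG3.Df τ (σ + τ) (z + τ) p) =
      ∏' p : ℕ × ℕ, EG3.Nf τ σ z (p.1 + p.2, p.2) / EG3.Df τ σ z (p.1 + p.2 + 1, p.2) from
      tprod_congr fun p => by rw [EG3.Nf2, EG3.Df2]]
    exact EG3.tprod_div_mul_eq _ _ hNA0 hDB0 S4 S3
  have E3 : ellipticGamma z (τ + σ) σ *
      (∏' p : ℕ × ℕ, EG3.Df τ σ z (p.1, p.1 + p.2)) =
      ∏' p : ℕ × ℕ, EG3.Nf τ σ z (p.1, p.1 + p.2 + 1) := by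
    rw [show ellipticGamma z (τ + σ) σ =
      ∏' p : ℕ × ℕ, EG3.Nf (τ + σ) σ z p / EG3.Df (τ + σ) σ z p from rfl]
    rw [show (∏' p : ℕ × ℕ, EG3.Nf (τ + σ) σ z p / EG3.Df (τ + σ) σ z p) =
      ∏' p : ℕ × ℕ, EG3.Nf τ σ z (p.1, p.1 + p.2 + 1) / EG3.Df τ σ z (p.1, p.1 + p.2) from
      tprod_congr fun p => by rw [EG3.Nf3, EG3.Df3]]
    exact EG3.tprod_div_mul_eq _ _ hNA'0 hDB'0 S6 S5
  have hPD : (∏' p : ℕ × ℕ, EG3.Df τ σ z p) ≠ 0 := EG3.tprod_ne' S1 hD0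
  apply mul_right_cancel₀ hPD
  calc ellipticGamma z τ σ * (∏' p : ℕ × ℕ, EG3.Df τ σ z p)
      = ∏' p : ℕ × ℕ, EG3.Nf τ σ z p := E1
    _ = (∏' p : ℕ × ℕ, EG3.Nf τ σ z (p.1 + p.2, p.2)) *
        (∏' p : ℕ × ℕ, EG3.Nf τ σ z (p.1, p.1 + p.2 + 1)) := EN.symm
    _ = (ellipticGamma (z + τ) τ (σ + τ) *
          (∏' p : ℕ × ℕ, EG3.Df τ σ z (p.1 + p.2 + 1, p.2))) *
        (ellipticGamma z (τ + σ) σ *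
          (∏' p : ℕ × ℕ, EG3.Df τ σ z (p.1, p.1 + p.2))) := by rw [E2, E3]
    _ = (ellipticGamma (z + τ) τ (σ + τ) * ellipticGamma z (τ + σ) σ) *
        ((∏' p : ℕ × ℕ, EG3.Df τ σ z (p.1 + p.2 + 1, p.2)) *
         (∏' p : ℕ × ℕ, EG3.Df τ σ z (p.1, p.1 + p.2))) := by ring
    _ = ellipticGamma (z + τ) τ (σ + τ) * ellipticGamma z (τ + σ) σ *
        (∏' p : ℕ × ℕ, EG3.Df τ σ z p) := by rw [ED]
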